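/- arXiv:2107.04305 — 5 statements merged into one kernel-verified Lean document; each statement's English description precedes it below -/
import Mathlib

section
/- For every t > 0, the range of the controllability Gramian W_t equals the range (column space) of the n×(nm) Kalman block matrix (σ, aσ, a²σ, …, a^{n-1}σ); consequently, for every t > 0 the matrix W_t is invertible if and only if the Kalman rank condition rank(σ, aσ, a²σ, …, a^{n-1}σ) = n holds. -/
open MeasureTheory Matrix intervalIntegral

/-- The controllability Gramian `W_t = ∫₀ᵗ e^{s a} σ σᵀ e^{s aᵀ} ds`, defined
as an entrywise Bochner integral. -/
noncomputable def controllabilityGramian (n m : ℕ) (a : Matrix (Fin n) (Fin n) ℝ)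
    (σ : Matrix (Fin n) (Fin m) ℝ) (t : ℝ) : Matrix (Fin n) (Fin n) ℝ :=
  Matrix.of fun i j =>
    ∫ s in (0:ℝ)..t,
      (NormedSpace.exp (s • a) * σ * σᵀ * NormedSpace.exp (s • aᵀ)) i j

/-- The Kalman block matrix `(σ, aσ, a²σ, …, a^{n-1}σ)`. -/
noncomputable def kalmanMatrix (n m : ℕ) (a : Matrix (Fin n) (Fin n) ℝ)
    (σ : Matrix (Fin n) (Fin m) ℝ) : Matrix (Fin n) (Fin n × Fin m) ℝ :=
  Matrix.of fun i p => (a ^ (p.1 : ℕ) * σ) i p.2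

namespace KalmanAux

open NormedSpace Set Filter

attribute [local instance] Matrix.linftyOpNormedRing Matrix.linftyOpNormedAlgebra

variable {n m : ℕ} (a : Matrix (Fin n) (Fin n) ℝ) (σ : Matrix (Fin n) (Fin m) ℝ)

/-- The continuous linear map `M ↦ (σᵀ * M) *ᵥ x`. -/
noncomputable def Phi (x : Fin n → ℝ) : Matrix (Fin n) (Fin n) ℝ →L[ℝ] (Fin m → ℝ) :=
  LinearMap.toContinuousLinearMap
    { toFun := fun M => (σᵀ * M).mulVec x
      map_add' := fun M N => by
        show (σᵀ * (M + N)).mulVec x = _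
        rw [Matrix.mul_add, Matrix.add_mulVec]
      map_smul' := fun c M => by
        show (σᵀ * (c • M)).mulVec x = _
        rw [Matrix.mul_smul, Matrix.smul_mulVec, RingHom.id_apply]
      }

@[simp] lemma Phi_apply (x : Fin n → ℝ) (M : Matrix (Fin n) (Fin n) ℝ) :
    Phi σ x M = (σᵀ * M).mulVec x := rfl

lemma continuous_exp_curve (A : Matrix (Fin n) (Fin n) ℝ) :
    Continuous fun s : ℝ => exp (s • A) :=
  continuous_iff_continuousAt.2 fun s => (hasDerivAt_exp_smul_const A s).continuousAt

lemma hasDerivAt_v (x : Fin n → ℝ) (k : ℕ) (s : ℝ) :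
    HasDerivAt (fun s : ℝ => Phi σ x (aᵀ ^ k * exp (s • aᵀ)))
      (Phi σ x (aᵀ ^ (k + 1) * exp (s • aᵀ))) s := by
  have h1 : HasDerivAt (fun s : ℝ => aᵀ ^ k * exp (s • aᵀ))
      (aᵀ ^ k * (exp (s • aᵀ) * aᵀ)) s :=
    (hasDerivAt_exp_smul_const (𝕂 := ℝ) aᵀ s).const_mul (aᵀ ^ k)
  have h2 := (Phi σ x).hasFDerivAt.comp_hasDerivAt s h1
  have hc : Commute aᵀ (exp (s • aᵀ)) :=
    (((Commute.refl aᵀ).smul_right s).exp_right)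
  have h3 : aᵀ ^ k * (exp (s • aᵀ) * aᵀ) = aᵀ ^ (k + 1) * exp (s • aᵀ) := by
    rw [pow_succ, mul_assoc, ← hc.eq]
  rw [h3] at h2
  exact h2

lemma continuous_v (x : Fin n → ℝ) (k : ℕ) :
    Continuous fun s : ℝ => Phi σ x (aᵀ ^ k * exp (s • aᵀ)) :=
  (Phi σ x).continuous.comp (continuous_const.mul (continuous_exp_curve aᵀ))

/-- Cayley–Hamilton: vanishing for `k < n` gives vanishing for all `k`. -/
lemma all_pow_zero (x : Fin n → ℝ)
    (h : ∀ k < n, Phi σ x (aᵀ ^ k) = 0) : ∀ k, Phi σ x (aᵀ ^ k) = 0 := by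
  have hch : aᵀ ^ n = -(∑ i ∈ Finset.range n, (aᵀ).charpoly.coeff i • aᵀ ^ i) := by
    have h0 := Matrix.aeval_self_charpoly aᵀ
    rw [Polynomial.aeval_eq_sum_range, Matrix.charpoly_natDegree_eq_dim,
      Fintype.card_fin, Finset.sum_range_succ] at h0
    have h1 : (aᵀ).charpoly.coeff n = 1 := by
      have h2 := (Matrix.charpoly_monic aᵀ).coeff_natDegree
      rwa [Matrix.charpoly_natDegree_eq_dim, Fintype.card_fin] at h2
    rw [h1, one_smul] at h0
    rw [eq_neg_iff_add_eq_zero, add_comm]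
    exact h0
  intro k
  induction k using Nat.strong_induction_on with
  | _ k ih =>
    rcases lt_or_ge k n with hk | hk
    · exact h k hk
    · have hkk : aᵀ ^ k = aᵀ ^ (k - n) * aᵀ ^ n := by
        rw [← pow_add]; congr 1; omega
      rw [hkk, hch, mul_neg, Finset.mul_sum, map_neg, map_sum, neg_eq_zero]
      refine Finset.sum_eq_zero fun i hi => ?_
      rw [Finset.mem_range] at hi
      rw [mul_smul_comm, ← pow_add, _root_.map_smul, ih (k - n + i) (by omega), smul_zero]

/-- If `σᵀ (aᵀ)^k x = 0` for all `k`, then `σᵀ e^{s aᵀ} x = 0` for all `s`. -/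
lemma phi_exp_zero (x : Fin n → ℝ) (h : ∀ k, Phi σ x (aᵀ ^ k) = 0) (s : ℝ) :
    Phi σ x (exp (s • aᵀ)) = 0 := by
  have he : exp (s • aᵀ) = ∑' k : ℕ, ((k.factorial : ℝ))⁻¹ • (s • aᵀ) ^ k := by
    rw [exp_eq_tsum ℝ]
  rw [he, (Phi σ x).map_tsum (expSeries_summable' (𝕂 := ℝ) (s • aᵀ))]
  have hz : ∀ k : ℕ, Phi σ x (((k.factorial : ℝ))⁻¹ • (s • aᵀ) ^ k) = 0 := by
    intro k
    rw [_root_.map_smul, smul_pow, _root_.map_smul, h k, smul_zero, smul_zero]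
  simp only [hz, tsum_zero]

/-- The integrand matrix. -/
noncomputable def F (s : ℝ) : Matrix (Fin n) (Fin n) ℝ :=
  exp (s • a) * σ * σᵀ * exp (s • aᵀ)

lemma continuous_F : Continuous fun s : ℝ => F a σ s :=
  (((continuous_exp_curve a).matrix_mul continuous_const).matrix_mul
    continuous_const).matrix_mul (continuous_exp_curve aᵀ)

lemma gram_mulVec (t : ℝ) (x : Fin n → ℝ) (i : Fin n) :
    (controllabilityGramian n m a σ t).mulVec x i
      = ∫ s in (0:ℝ)..t, ((F a σ s).mulVec x) i := by
  have hint : ∀ j, IntervalIntegrable (fun s => F a σ s i j * x j) volume 0 t :=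
    fun j => (((continuous_F a σ).matrix_elem i j).mul continuous_const).intervalIntegrable _ _
  calc (controllabilityGramian n m a σ t).mulVec x i
      = ∑ j, (∫ s in (0:ℝ)..t, F a σ s i j) * x j := rfl
    _ = ∑ j, ∫ s in (0:ℝ)..t, F a σ s i j * x j := by
        refine Finset.sum_congr rfl fun j _ => ?_
        rw [← intervalIntegral.integral_mul_const]
    _ = ∫ s in (0:ℝ)..t, ∑ j, F a σ s i j * x j := by
        rw [← intervalIntegral.integral_finset_sum]
        exact fun j _ => hint j
    _ = _ := rfl

lemma Pt_eq (s : ℝ) : (exp (s • a) * σ)ᵀ = σᵀ * exp (s • aᵀ) := by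
  rw [Matrix.transpose_mul, ← Matrix.transpose_smul, Matrix.exp_transpose]

lemma F_dot (s : ℝ) (x : Fin n → ℝ) :
    x ⬝ᵥ (F a σ s).mulVec x
      = ((σᵀ * exp (s • aᵀ)).mulVec x) ⬝ᵥ ((σᵀ * exp (s • aᵀ)).mulVec x) := by
  have hF : F a σ s = (exp (s • a) * σ) * (exp (s • a) * σ)ᵀ := by
    rw [F, Pt_eq, Matrix.mul_assoc]
  rw [hF, ← Matrix.mulVec_mulVec, Matrix.dotProduct_mulVec,
    ← Matrix.mulVec_transpose, Pt_eq]

lemma dot_gram (t : ℝ) (x : Fin n → ℝ) :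
    x ⬝ᵥ (controllabilityGramian n m a σ t).mulVec x
      = ∫ s in (0:ℝ)..t,
          ((σᵀ * exp (s • aᵀ)).mulVec x) ⬝ᵥ ((σᵀ * exp (s • aᵀ)).mulVec x) := by
  have hcont : ∀ i : Fin n, IntervalIntegrable
      (fun s => x i * ((F a σ s).mulVec x) i) volume 0 t := by
    intro i
    exact (continuous_const.mul
      ((continuous_apply i).comp ((continuous_F a σ).matrix_mulVec continuous_const))
      ).intervalIntegrable _ _
  calc x ⬝ᵥ (controllabilityGramian n m a σ t).mulVec x
      = ∑ i, x i * (controllabilityGramian n m a σ t).mulVec x i := rfl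
    _ = ∑ i, ∫ s in (0:ℝ)..t, x i * ((F a σ s).mulVec x) i := by
        refine Finset.sum_congr rfl fun i _ => ?_
        rw [gram_mulVec, ← intervalIntegral.integral_const_mul]
    _ = ∫ s in (0:ℝ)..t, ∑ i, x i * ((F a σ s).mulVec x) i := by
        rw [← intervalIntegral.integral_finset_sum]
        exact fun i _ => hcont i
    _ = _ := by
        refine intervalIntegral.integral_congr fun s _ => ?_
        exact (F_dot a σ s x)

lemma gram_symm (t : ℝ) :
    (controllabilityGramian n m a σ t)ᵀ = controllabilityGramian n m a σ t := by
  have hFs : ∀ s : ℝ, (F a σ s)ᵀ = F a σ s := by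
    intro s
    have : F a σ s = (exp (s • a) * σ) * (exp (s • a) * σ)ᵀ := by
      rw [F, Pt_eq, Matrix.mul_assoc]
    rw [this, Matrix.transpose_mul, Matrix.transpose_transpose]
  ext i j
  show (∫ s in (0:ℝ)..t, F a σ s j i) = ∫ s in (0:ℝ)..t, F a σ s i j
  refine intervalIntegral.integral_congr fun s _ => ?_
  conv_lhs => rw [← hFs s]
  rw [Matrix.transpose_apply]

/-- Main kernel characterization of the Gramian. -/
lemma gram_ker (t : ℝ) (ht : 0 < t) (x : Fin n → ℝ) :
    (controllabilityGramian n m a σ t).mulVec x = 0 ↔ ∀ k, Phi σ x (aᵀ ^ k) = 0 := by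
  constructor
  · intro hW
    -- the quadratic form vanishes
    have hdot : (∫ s in (0:ℝ)..t,
        ((σᵀ * exp (s • aᵀ)).mulVec x) ⬝ᵥ ((σᵀ * exp (s • aᵀ)).mulVec x)) = 0 := by
      rw [← dot_gram, hW, dotProduct_zero]
    have hcontu : Continuous fun s : ℝ => (σᵀ * exp (s • aᵀ)).mulVec x :=
      ((continuous_const.matrix_mul (continuous_exp_curve aᵀ)).matrix_mulVec
        continuous_const)
    have hcontg : Continuous fun s : ℝ =>
        ((σᵀ * exp (s • aᵀ)).mulVec x) ⬝ᵥ ((σᵀ * exp (s • aᵀ)).mulVec x) :=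
      hcontu.dotProduct hcontu
    have hnn : ∀ s : ℝ, (0:ℝ) ≤
        ((σᵀ * exp (s • aᵀ)).mulVec x) ⬝ᵥ ((σᵀ * exp (s • aᵀ)).mulVec x) :=
      fun s => Finset.sum_nonneg fun i _ => mul_self_nonneg _
    have hae := (intervalIntegral.integral_eq_zero_iff_of_le_of_nonneg_ae ht.le
      (Filter.Eventually.of_forall hnn)
      (hcontg.intervalIntegrable 0 t)).mp hdot
    have heq : Set.EqOn (fun s : ℝ =>
        ((σᵀ * exp (s • aᵀ)).mulVec x) ⬝ᵥ ((σᵀ * exp (s • aᵀ)).mulVec x))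
        0 (Set.Ioc 0 t) :=
      MeasureTheory.Measure.eqOn_Ioc_of_ae_eq volume hae hcontg.continuousOn
        continuousOn_const
    have hu0 : ∀ s ∈ Set.Ioc (0:ℝ) t, (σᵀ * exp (s • aᵀ)).mulVec x = 0 := fun s hs =>
      dotProduct_self_eq_zero.mp (by simpa using heq hs)
    have hvIoo : ∀ k, ∀ s ∈ Set.Ioo (0:ℝ) t, Phi σ x (aᵀ ^ k * exp (s • aᵀ)) = 0 := by
      intro k
      induction k with
      | zero =>
        intro s hs
        have := hu0 s (Set.Ioo_subset_Ioc_self hs)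
        simpa [pow_zero, Matrix.one_mul] using this
      | succ k ih =>
        intro s hs
        have hd := hasDerivAt_v a σ x k s
        have hevt : (fun s : ℝ => Phi σ x (aᵀ ^ k * exp (s • aᵀ))) =ᶠ[nhds s]
            fun _ => 0 :=
          Filter.eventuallyEq_of_mem (isOpen_Ioo.mem_nhds hs) ih
        have hd0 : HasDerivAt (fun s : ℝ => Phi σ x (aᵀ ^ k * exp (s • aᵀ))) 0 s :=
          (hasDerivAt_const s (0 : Fin m → ℝ)).congr_of_eventuallyEq hevt
        exact hd.unique hd0
    intro k
    have hcl : Set.EqOn (fun s : ℝ => Phi σ x (aᵀ ^ k * exp (s • aᵀ))) 0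
        (closure (Set.Ioo (0:ℝ) t)) :=
      Set.EqOn.closure (fun s hs => hvIoo k s hs) (continuous_v a σ x k) continuous_const
    have h0m : (0:ℝ) ∈ closure (Set.Ioo (0:ℝ) t) := by
      rw [closure_Ioo ht.ne]; exact Set.left_mem_Icc.mpr ht.le
    have h0 := hcl h0m
    simpa [zero_smul, exp_zero, mul_one] using h0
  · intro h
    funext i
    rw [gram_mulVec]
    have hzero : ∀ s : ℝ, (F a σ s).mulVec x = 0 := by
      intro s
      have hu : (σᵀ * exp (s • aᵀ)).mulVec x = 0 := by
        have := phi_exp_zero a σ x h s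
        rwa [Phi_apply] at this
      have : F a σ s = (exp (s • a) * σ) * (σᵀ * exp (s • aᵀ)) := by
        rw [F, Matrix.mul_assoc]
      rw [this, ← Matrix.mulVec_mulVec, hu, Matrix.mulVec_zero]
    simp only [hzero, Pi.zero_apply, intervalIntegral.integral_zero]

/-- Transport to `EuclideanSpace`. -/
noncomputable def eE (n : ℕ) : (Fin n → ℝ) ≃ₗ[ℝ] EuclideanSpace ℝ (Fin n) :=
  (WithLp.linearEquiv 2 ℝ (Fin n → ℝ)).symm

lemma map_range_eq_orthogonal {n : ℕ} {k : Type*} [Fintype k] (M : Matrix (Fin n) k ℝ) :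
    (LinearMap.range M.mulVecLin).map
        (eE n : (Fin n → ℝ) →ₗ[ℝ] EuclideanSpace ℝ (Fin n))
      = ((LinearMap.ker Mᵀ.mulVecLin).map
          (eE n : (Fin n → ℝ) →ₗ[ℝ] EuclideanSpace ℝ (Fin n)))ᗮ := by
  have hle : (LinearMap.range M.mulVecLin).map
        (eE n : (Fin n → ℝ) →ₗ[ℝ] EuclideanSpace ℝ (Fin n))
      ≤ ((LinearMap.ker Mᵀ.mulVecLin).map
          (eE n : (Fin n → ℝ) →ₗ[ℝ] EuclideanSpace ℝ (Fin n)))ᗮ := by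
    rintro y hy
    rw [Submodule.mem_map] at hy
    obtain ⟨w, hw, rfl⟩ := hy
    obtain ⟨v, rfl⟩ := hw
    rw [Submodule.mem_orthogonal]
    rintro u hu
    rw [Submodule.mem_map] at hu
    obtain ⟨z, hz, rfl⟩ := hu
    rw [LinearMap.mem_ker, Matrix.mulVecLin_apply] at hz
    show M.mulVec v ⬝ᵥ star z = 0
    rw [star_trivial, dotProduct_comm]
    rw [Matrix.dotProduct_mulVec, ← Matrix.mulVec_transpose, hz, zero_dotProduct]
  refine Submodule.eq_of_le_of_finrank_eq hle ?_
  have e1 : Module.finrank ℝ ((LinearMap.range M.mulVecLin).map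
      (eE n : (Fin n → ℝ) →ₗ[ℝ] EuclideanSpace ℝ (Fin n)))
      = Module.finrank ℝ (LinearMap.range M.mulVecLin) :=
    LinearEquiv.finrank_map_eq _ _
  have e2 : Module.finrank ℝ ((LinearMap.ker Mᵀ.mulVecLin).map
      (eE n : (Fin n → ℝ) →ₗ[ℝ] EuclideanSpace ℝ (Fin n)))
      = Module.finrank ℝ (LinearMap.ker Mᵀ.mulVecLin) :=
    LinearEquiv.finrank_map_eq _ _
  have e3 := LinearMap.finrank_range_add_finrank_ker Mᵀ.mulVecLin
  have e4 := Submodule.finrank_add_finrank_orthogonal ((LinearMap.ker Mᵀ.mulVecLin).map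
      (eE n : (Fin n → ℝ) →ₗ[ℝ] EuclideanSpace ℝ (Fin n)))
  have e5 : Mᵀ.rank = M.rank := Matrix.rank_transpose M
  have e6 : Module.finrank ℝ (Fin n → ℝ) = n := by simp
  have e7 : Module.finrank ℝ (EuclideanSpace ℝ (Fin n)) = n := finrank_euclideanSpace_fin
  have e8 : Mᵀ.rank = Module.finrank ℝ (LinearMap.range Mᵀ.mulVecLin) := rfl
  have e9 : M.rank = Module.finrank ℝ (LinearMap.range M.mulVecLin) := rfl
  rw [e6] at e3
  rw [e7] at e4
  omega

lemma range_eq_of_ker_transpose_eq {n : ℕ} {k l : Type*} [Fintype k] [Fintype l]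
    (M : Matrix (Fin n) k ℝ) (N : Matrix (Fin n) l ℝ)
    (h : LinearMap.ker Mᵀ.mulVecLin = LinearMap.ker Nᵀ.mulVecLin) :
    LinearMap.range M.mulVecLin = LinearMap.range N.mulVecLin := by
  have h1 := map_range_eq_orthogonal M
  have h2 := map_range_eq_orthogonal N
  rw [h, ← h2] at h1
  exact Submodule.map_injective_of_injective (eE n).injective h1

lemma kalmanT_apply (x : Fin n → ℝ) (k : Fin n) (j : Fin m) :
    (kalmanMatrix n m a σ)ᵀ.mulVec x (k, j) = Phi σ x (aᵀ ^ (k : ℕ)) j := by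
  show ∑ i, (kalmanMatrix n m a σ)ᵀ (k, j) i * x i
      = ∑ i, (σᵀ * aᵀ ^ (k : ℕ)) j i * x i
  refine Finset.sum_congr rfl fun i _ => ?_
  congr 1
  show (a ^ (k : ℕ) * σ) i j = (σᵀ * aᵀ ^ (k : ℕ)) j i
  rw [← Matrix.transpose_pow, ← Matrix.transpose_mul, Matrix.transpose_apply]

lemma kalman_ker (x : Fin n → ℝ) :
    (kalmanMatrix n m a σ)ᵀ.mulVec x = 0 ↔ ∀ k < n, Phi σ x (aᵀ ^ k) = 0 := by
  constructor
  · intro h k hk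
    funext j
    have h2 := congrFun h (⟨k, hk⟩, j)
    rw [kalmanT_apply] at h2
    simpa using h2
  · intro h
    funext p
    obtain ⟨k, j⟩ := p
    rw [Pi.zero_apply, kalmanT_apply, h (k : ℕ) k.isLt]
    rfl

end KalmanAux

open KalmanAux in
/-- For every `t > 0`, the range of the controllability Gramian `W_t` equals the column
space of the Kalman matrix `(σ, aσ, …, a^{n-1}σ)`; consequently, for every `t > 0`,
`W_t` is invertible iff the Kalman rank condition holds. -/
theorem gramian_range_eq_kalman_range_and_invertible_iff_kalman_rank
    (n m : ℕ) (a : Matrix (Fin n) (Fin n) ℝ) (σ : Matrix (Fin n) (Fin m) ℝ) :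
    (∀ t : ℝ, 0 < t →
      LinearMap.range (controllabilityGramian n m a σ t).mulVecLin
        = LinearMap.range (kalmanMatrix n m a σ).mulVecLin) ∧
    (∀ t : ℝ, 0 < t →
      (IsUnit (controllabilityGramian n m a σ t) ↔ (kalmanMatrix n m a σ).rank = n)) := by
  have hrange : ∀ t : ℝ, 0 < t →
      LinearMap.range (controllabilityGramian n m a σ t).mulVecLin
        = LinearMap.range (kalmanMatrix n m a σ).mulVecLin := by
    intro t ht
    apply range_eq_of_ker_transpose_eq
    rw [gram_symm]
    ext x
    rw [LinearMap.mem_ker, LinearMap.mem_ker, Matrix.mulVecLin_apply,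
      Matrix.mulVecLin_apply, gram_ker a σ t ht x, kalman_ker a σ x]
    exact ⟨fun h k _ => h k, all_pow_zero a σ x⟩
  refine ⟨hrange, fun t ht => ?_⟩
  have hsurj : Function.Surjective (controllabilityGramian n m a σ t).mulVec ↔
      LinearMap.range (controllabilityGramian n m a σ t).mulVecLin = ⊤ := by
    rw [LinearMap.range_eq_top]; exact Iff.rfl
  rw [← Matrix.mulVec_surjective_iff_isUnit, hsurj, hrange t ht]
  constructor
  · intro h
    show Module.finrank ℝ ↥(LinearMap.range (kalmanMatrix n m a σ).mulVecLin) = n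
    rw [h, finrank_top]
    simp
  · intro h
    apply Submodule.eq_top_of_finrank_eq
    rw [show Module.finrank ℝ (Fin n → ℝ) = n by simp]
    exact h
end

section
/- If σ σᵀ is positive definite, then for every T > 0 there exists a constant c > 0 such that for all t ∈ (0, T] and all x ∈ ℝⁿ one has ⟨W_t x, x⟩ ≥ c t |x|². In particular, W_t is invertible for every t ∈ (0, T] and the operator norm of W_t^{-1/2} is at most (c t)^{-1/2}. -/
open MeasureTheory Matrix intervalIntegral

section

open scoped ComplexOrder

/-- The square root of a positive semidefinite matrix, as `Matrix.PosSemidef.sqrt` was defined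
in the older Mathlib (it has since been removed). -/
noncomputable def Matrix.PosSemidef.sqrt {n 𝕜 : Type*} [Fintype n] [RCLike 𝕜] [DecidableEq n]
    {A : Matrix n n 𝕜} (hA : A.PosSemidef) : Matrix n n 𝕜 :=
  hA.1.eigenvectorUnitary.1 * diagonal ((↑) ∘ (√·) ∘ hA.1.eigenvalues) *
    (star hA.1.eigenvectorUnitary : Matrix n n 𝕜)

end

namespace Matrix.PosSemidef
lemma sqrt_mul_self {n : ℕ} {A : Matrix (Fin n) (Fin n) ℝ} (hA : A.PosSemidef) :
    hA.sqrt * hA.sqrt = A := by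
  have hU : (star hA.1.eigenvectorUnitary : Matrix (Fin n) (Fin n) ℝ) *
      (hA.1.eigenvectorUnitary : Matrix (Fin n) (Fin n) ℝ) = 1 :=
    Unitary.coe_star_mul_self _
  have hD : diagonal (RCLike.ofReal ∘ (√·) ∘ hA.1.eigenvalues : Fin n → ℝ) *
      diagonal (RCLike.ofReal ∘ (√·) ∘ hA.1.eigenvalues : Fin n → ℝ) =
      diagonal (RCLike.ofReal ∘ hA.1.eigenvalues : Fin n → ℝ) := by
    rw [diagonal_mul_diagonal]
    congr 1
    funext i
    simp [Real.mul_self_sqrt (hA.eigenvalues_nonneg i)]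
  unfold Matrix.PosSemidef.sqrt
  conv_rhs => rw [hA.1.spectral_theorem]
  rw [Unitary.conjStarAlgAut_apply]
  simp only [Matrix.mul_assoc]
  rw [← Matrix.mul_assoc (star hA.1.eigenvectorUnitary : Matrix (Fin n) (Fin n) ℝ), hU,
    Matrix.one_mul, ← Matrix.mul_assoc (diagonal _), hD]
lemma posSemidef_sqrt {n : ℕ} {A : Matrix (Fin n) (Fin n) ℝ} (hA : A.PosSemidef) :
    hA.sqrt.PosSemidef := by
  unfold Matrix.PosSemidef.sqrt
  rw [star_eq_conjTranspose]
  refine PosSemidef.mul_mul_conjTranspose_same ?_ _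
  rw [posSemidef_diagonal_iff]
  intro i
  simp [Real.sqrt_nonneg]
end Matrix.PosSemidef

namespace GramianAux

open scoped Matrix.Norms.L2Operator
open NormedSpace

variable {n : ℕ}

lemma dot_self_nonneg (x : Fin n → ℝ) : 0 ≤ x ⬝ᵥ x :=
  Finset.sum_nonneg fun _ _ => mul_self_nonneg _

lemma dot_self_pos {x : Fin n → ℝ} (hx : x ≠ 0) : 0 < x ⬝ᵥ x :=
  lt_of_le_of_ne (dot_self_nonneg x)
    (Ne.symm (fun h => hx (dotProduct_self_eq_zero.mp h)))

lemma dot_eq_sq_norm (x : Fin n → ℝ) :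
    x ⬝ᵥ x = ‖(EuclideanSpace.equiv (Fin n) ℝ).symm x‖ ^ 2 := by
  rw [EuclideanSpace.norm_eq, Real.sq_sqrt (Finset.sum_nonneg fun i _ => by positivity)]
  simp [dotProduct, Real.norm_eq_abs, sq_abs, sq]

lemma dot_mulVec_le (M : Matrix (Fin n) (Fin n) ℝ) (x : Fin n → ℝ) :
    (M *ᵥ x) ⬝ᵥ (M *ᵥ x) ≤ ‖M‖ ^ 2 * (x ⬝ᵥ x) := by
  have h := M.l2_opNorm_mulVec ((EuclideanSpace.equiv (Fin n) ℝ).symm x)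
  rw [dot_eq_sq_norm, dot_eq_sq_norm]
  calc ‖(EuclideanSpace.equiv (Fin n) ℝ).symm (M *ᵥ x)‖ ^ 2
      ≤ (‖M‖ * ‖(EuclideanSpace.equiv (Fin n) ℝ).symm x‖) ^ 2 := by
        apply pow_le_pow_left₀ (norm_nonneg _) _ 2
        exact h
    _ = ‖M‖ ^ 2 * ‖(EuclideanSpace.equiv (Fin n) ℝ).symm x‖ ^ 2 := by ring

lemma transpose_eq_self_of_posSemidef {S : Matrix (Fin n) (Fin n) ℝ} (hS : S.PosSemidef) :
    Sᵀ = S := by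
  ext i j
  simpa using congrFun (congrFun hS.isHermitian i) j

/-- Uniform quadratic lower bound for a positive definite matrix. -/
lemma posDef_lower (B : Matrix (Fin n) (Fin n) ℝ) (hB : B.PosDef) :
    ∃ c : ℝ, 0 < c ∧ ∀ y : Fin n → ℝ, c * (y ⬝ᵥ y) ≤ y ⬝ᵥ B *ᵥ y := by
  set S := hB.posSemidef.sqrt with hSdef
  have hS : S.PosSemidef := hB.posSemidef.posSemidef_sqrt
  have hSS : S * S = B := hB.posSemidef.sqrt_mul_self
  have hSt : Sᵀ = S := transpose_eq_self_of_posSemidef hS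
  have hdet : IsUnit S.det := by
    have hmul : S.det * S.det = B.det := by rw [← Matrix.det_mul, hSS]
    have hBdet := hB.det_pos
    rw [isUnit_iff_ne_zero]
    intro h
    rw [h, mul_zero] at hmul
    exact absurd hmul.symm (ne_of_gt hBdet)
  have key : ∀ y : Fin n → ℝ, y ⬝ᵥ B *ᵥ y = (S *ᵥ y) ⬝ᵥ (S *ᵥ y) := by
    intro y
    rw [← hSS, ← Matrix.mulVec_mulVec, Matrix.dotProduct_mulVec, ← Matrix.mulVec_transpose, hSt]
  refine ⟨(‖S⁻¹‖ ^ 2 + 1)⁻¹, by positivity, fun y => ?_⟩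
  rw [key]
  have hy : S⁻¹ *ᵥ (S *ᵥ y) = y := by
    rw [Matrix.mulVec_mulVec, Matrix.nonsing_inv_mul _ hdet, Matrix.one_mulVec]
  have h1 : y ⬝ᵥ y ≤ ‖S⁻¹‖ ^ 2 * ((S *ᵥ y) ⬝ᵥ (S *ᵥ y)) := by
    have := dot_mulVec_le S⁻¹ (S *ᵥ y)
    rwa [hy] at this
  have h2 : (0:ℝ) ≤ (S *ᵥ y) ⬝ᵥ (S *ᵥ y) := dot_self_nonneg _
  have h3 : (0:ℝ) < ‖S⁻¹‖ ^ 2 + 1 := by positivity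
  rw [inv_mul_le_iff₀ h3]
  nlinarith

lemma sandwich (P B : Matrix (Fin n) (Fin n) ℝ) (x : Fin n → ℝ) :
    ((Pᵀ * B * P) *ᵥ x) ⬝ᵥ x = (P *ᵥ x) ⬝ᵥ (B *ᵥ (P *ᵥ x)) :=
  calc ((Pᵀ * B * P) *ᵥ x) ⬝ᵥ x
      = (Pᵀ *ᵥ ((B * P) *ᵥ x)) ⬝ᵥ x := by rw [Matrix.mulVec_mulVec, Matrix.mul_assoc]
    _ = (((B * P) *ᵥ x) ᵥ* P) ⬝ᵥ x := by rw [Matrix.mulVec_transpose]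
    _ = ((B * P) *ᵥ x) ⬝ᵥ (P *ᵥ x) := by rw [← Matrix.dotProduct_mulVec]
    _ = (B *ᵥ (P *ᵥ x)) ⬝ᵥ (P *ᵥ x) := by rw [Matrix.mulVec_mulVec]
    _ = (P *ᵥ x) ⬝ᵥ (B *ᵥ (P *ᵥ x)) := dotProduct_comm _ _

/-- Uniform bound `x⬝x ≤ C ((exp (s•A)) x ⬝ (exp (s•A)) x)` for `s` in a compact interval. -/
lemma exists_exp_bound (T : ℝ) (A : Matrix (Fin n) (Fin n) ℝ) :
    ∃ C : ℝ, 0 < C ∧ ∀ s ∈ Set.Icc (0:ℝ) T, ∀ x : Fin n → ℝ,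
      x ⬝ᵥ x ≤ C * ((exp (s • A) *ᵥ x) ⬝ᵥ (exp (s • A) *ᵥ x)) := by
  have hcont : Continuous fun s : ℝ => exp (-(s • A)) := by
    letI : NormedAlgebra ℚ (Matrix (Fin n) (Fin n) ℝ) := NormedAlgebra.restrictScalars ℚ ℝ _; exact exp_continuous.comp (continuous_id.smul continuous_const).neg
  obtain ⟨C0, hC0⟩ :=
    (isCompact_Icc (a := (0:ℝ)) (b := T)).exists_bound_of_continuousOn hcont.continuousOn
  refine ⟨C0 ^ 2 + 1, by positivity, fun s hs x => ?_⟩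
  have h1 : exp (-(s • A)) * exp (s • A) = 1 := by
    rw [← Matrix.exp_add_of_commute _ _ (Commute.neg_left (Commute.refl (s • A))),
      neg_add_cancel, exp_zero]
  have hx : exp (-(s • A)) *ᵥ (exp (s • A) *ᵥ x) = x := by
    rw [Matrix.mulVec_mulVec, h1, Matrix.one_mulVec]
  have h2 := dot_mulVec_le (exp (-(s • A))) (exp (s • A) *ᵥ x)
  rw [hx] at h2
  have h3 : ‖exp (-(s • A))‖ ≤ C0 := hC0 s hs
  have h4 : (0:ℝ) ≤ ‖exp (-(s • A))‖ := norm_nonneg _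
  have h5 : (0:ℝ) ≤ (exp (s • A) *ᵥ x) ⬝ᵥ (exp (s • A) *ᵥ x) := dot_self_nonneg _
  have h6 := mul_le_mul_of_nonneg_right (pow_le_pow_left₀ h4 h3 2) h5
  nlinarith

end GramianAux

open GramianAux NormedSpace
open scoped Matrix.Norms.L2Operator

set_option maxHeartbeats 2000000 in
/-- If `σ σᵀ` is positive definite then for every `T > 0` there is `c > 0` such that for all
`t ∈ (0, T]` and all `x`, `⟨W_t x, x⟩ ≥ c t |x|²`; in particular `W_t` is invertible for
`t ∈ (0, T]` and the (Euclidean) operator norm of `W_t^{-1/2}` is at most `(c t)^{-1/2}`,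
i.e. `‖W_t^{-1/2} x‖² ≤ (c t)⁻¹ ‖x‖²` for all `x`, where `W_t^{1/2}` is the positive
semidefinite square root of `W_t`. -/
theorem gramian_quadratic_lower_bound_of_posDef
    (n m : ℕ) (a : Matrix (Fin n) (Fin n) ℝ) (σ : Matrix (Fin n) (Fin m) ℝ)
    (hσ : (σ * σᵀ).PosDef) (T : ℝ) (hT : 0 < T) :
    ∃ c : ℝ, 0 < c ∧ ∀ t ∈ Set.Ioc (0:ℝ) T,
      (∀ x : Fin n → ℝ,
        c * t * (x ⬝ᵥ x) ≤ (controllabilityGramian n m a σ t).mulVec x ⬝ᵥ x) ∧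
      IsUnit (controllabilityGramian n m a σ t) ∧
      (∀ (hW : (controllabilityGramian n m a σ t).PosSemidef) (x : Fin n → ℝ),
        (hW.sqrt)⁻¹.mulVec x ⬝ᵥ (hW.sqrt)⁻¹.mulVec x ≤ (c * t)⁻¹ * (x ⬝ᵥ x)) := by
  classical
  -- the matrix integrand
  set M : ℝ → Matrix (Fin n) (Fin n) ℝ :=
    fun s => exp (s • a) * σ * σᵀ * exp (s • aᵀ) with hMdef
  -- continuity of the integrand
  have hexpa : Continuous fun s : ℝ => exp (s • a) := by
    letI : NormedAlgebra ℚ (Matrix (Fin n) (Fin n) ℝ) := NormedAlgebra.restrictScalars ℚ ℝ _; exact exp_continuous.comp (continuous_id.smul continuous_const)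
  have hexpaT : Continuous fun s : ℝ => exp (s • aᵀ) := by
    letI : NormedAlgebra ℚ (Matrix (Fin n) (Fin n) ℝ) := NormedAlgebra.restrictScalars ℚ ℝ _; exact exp_continuous.comp (continuous_id.smul continuous_const)
  have hMc : Continuous M :=
    ((hexpa.matrix_mul continuous_const).matrix_mul continuous_const).matrix_mul hexpaT
  have hMij : ∀ i j, Continuous fun s => M s i j := fun i j => hMc.matrix_elem i j
  -- symmetry of the integrand
  have hMsym : ∀ s, (M s)ᵀ = M s := by
    intro s
    simp only [hMdef, Matrix.transpose_mul, Matrix.transpose_transpose,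
      ← Matrix.exp_transpose, Matrix.transpose_smul, Matrix.mul_assoc]
  -- the quadratic form of the integrand
  have hquad : ∀ s (x : Fin n → ℝ),
      (M s *ᵥ x) ⬝ᵥ x = (exp (s • aᵀ) *ᵥ x) ⬝ᵥ ((σ * σᵀ) *ᵥ (exp (s • aᵀ) *ᵥ x)) := by
    intro s x
    have hPt : exp (s • a) = (exp (s • aᵀ))ᵀ := by
      rw [← Matrix.exp_transpose, Matrix.transpose_smul, Matrix.transpose_transpose]
    have hM : M s = (exp (s • aᵀ))ᵀ * (σ * σᵀ) * exp (s • aᵀ) := by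
      rw [hMdef, ← hPt]
      simp only [Matrix.mul_assoc]
    rw [hM, sandwich]
  -- constants
  obtain ⟨c₀, hc₀, hB⟩ := posDef_lower (σ * σᵀ) hσ
  obtain ⟨C, hC, hexp⟩ := exists_exp_bound T aᵀ
  refine ⟨c₀ / C, by positivity, fun t ht => ?_⟩
  -- the gramian quadratic form as an interval integral
  have hswap : ∀ x : Fin n → ℝ,
      (controllabilityGramian n m a σ t) *ᵥ x ⬝ᵥ x
        = ∫ s in (0:ℝ)..t, (M s *ᵥ x) ⬝ᵥ x := by
    intro x
    have hInt : ∀ i j, IntervalIntegrable (fun s => M s i j) volume 0 t :=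
      fun i j => (hMij i j).intervalIntegrable 0 t
    calc (controllabilityGramian n m a σ t) *ᵥ x ⬝ᵥ x
        = ∑ i, (∑ j, (∫ s in (0:ℝ)..t, M s i j) * x j) * x i := by
          simp [controllabilityGramian, Matrix.mulVec, dotProduct, hMdef]
      _ = ∑ i, (∫ s in (0:ℝ)..t, ∑ j, M s i j * x j) * x i := by
          refine Finset.sum_congr rfl fun i _ => ?_
          congr 1
          rw [intervalIntegral.integral_finset_sum (fun j _ => (hInt i j).mul_const (x j))]
          simp [intervalIntegral.integral_mul_const]
      _ = ∑ i, ∫ s in (0:ℝ)..t, (∑ j, M s i j * x j) * x i := by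
          refine Finset.sum_congr rfl fun i _ => ?_
          rw [intervalIntegral.integral_mul_const]
      _ = ∫ s in (0:ℝ)..t, ∑ i, (∑ j, M s i j * x j) * x i :=
          (intervalIntegral.integral_finset_sum
            (f := fun i s => (∑ j, M s i j * x j) * x i)
            (fun i _ =>
              (((continuous_finset_sum _ fun j _ => (hMij i j).mul continuous_const).mul
                continuous_const).intervalIntegrable 0 t))).symm
      _ = ∫ s in (0:ℝ)..t, (M s *ᵥ x) ⬝ᵥ x := by
          refine intervalIntegral.integral_congr fun s _ => ?_
          simp [Matrix.mulVec, dotProduct]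
  -- the main quadratic lower bound
  have key : ∀ x : Fin n → ℝ,
      c₀ / C * t * (x ⬝ᵥ x) ≤ (controllabilityGramian n m a σ t) *ᵥ x ⬝ᵥ x := by
    intro x
    rw [hswap x]
    have hpt : ∀ s ∈ Set.Icc (0:ℝ) t, c₀ / C * (x ⬝ᵥ x) ≤ (M s *ᵥ x) ⬝ᵥ x := by
      intro s hs
      have hsT : s ∈ Set.Icc (0:ℝ) T := ⟨hs.1, hs.2.trans ht.2⟩
      set y := exp (s • aᵀ) *ᵥ x with hy
      have h1 : x ⬝ᵥ x ≤ C * (y ⬝ᵥ y) := hexp s hsT x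
      have h2 : c₀ * (y ⬝ᵥ y) ≤ y ⬝ᵥ (σ * σᵀ) *ᵥ y := hB y
      rw [hquad s x]
      have : c₀ / C * (x ⬝ᵥ x) ≤ c₀ / C * (C * (y ⬝ᵥ y)) :=
        mul_le_mul_of_nonneg_left h1 (by positivity)
      calc c₀ / C * (x ⬝ᵥ x) ≤ c₀ / C * (C * (y ⬝ᵥ y)) := this
        _ = c₀ * (y ⬝ᵥ y) := by field_simp <;> ring
        _ ≤ y ⬝ᵥ (σ * σᵀ) *ᵥ y := h2
    have hg : Continuous fun s => (M s *ᵥ x) ⬝ᵥ x :=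
      (hMc.matrix_mulVec continuous_const).dotProduct continuous_const
    have hmono := intervalIntegral.integral_mono_on (μ := volume) (a := (0:ℝ)) (b := t) ht.1.le
      (_root_.intervalIntegrable_const (c := c₀ / C * (x ⬝ᵥ x)))
      (hg.intervalIntegrable 0 t) hpt
    rw [intervalIntegral.integral_const] at hmono
    calc c₀ / C * t * (x ⬝ᵥ x) = (t - 0) • (c₀ / C * (x ⬝ᵥ x)) := by
          simp [smul_eq_mul]; ring
      _ ≤ _ := hmono
  -- positive definiteness of the gramian
  have hW_PD : (controllabilityGramian n m a σ t).PosDef := by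
    refine Matrix.PosDef.of_dotProduct_mulVec_pos ?_ ?_
    · -- Hermitian
      ext i j
      simp only [Matrix.conjTranspose_apply, controllabilityGramian, Matrix.of_apply,
        star_trivial]
      refine intervalIntegral.integral_congr fun s _ => ?_
      have := hMsym s
      calc M s j i = (M s)ᵀ i j := rfl
        _ = M s i j := by rw [this]
    · intro x hx
      have h1 := key x
      have h2 : 0 < c₀ / C * t * (x ⬝ᵥ x) :=
        mul_pos (mul_pos (div_pos hc₀ hC) ht.1) (dot_self_pos hx)
      have : 0 < (controllabilityGramian n m a σ t) *ᵥ x ⬝ᵥ x := lt_of_lt_of_le h2 h1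
      simpa [dotProduct_comm, star_trivial] using this
  refine ⟨key, hW_PD.isUnit, fun hW x => ?_⟩
  -- the square-root bound
  set W := controllabilityGramian n m a σ t with hWdef
  set S := hW.sqrt with hSdef
  have hSS : S * S = W := hW.sqrt_mul_self
  have hSt : Sᵀ = S := transpose_eq_self_of_posSemidef hW.posSemidef_sqrt
  have hdet : IsUnit S.det := by
    have hWdet : IsUnit W.det := (Matrix.isUnit_iff_isUnit_det W).mp hW_PD.isUnit
    have hmul : S.det * S.det = W.det := by rw [← Matrix.det_mul, hSS]
    rw [← hmul] at hWdet
    exact isUnit_of_mul_isUnit_left hWdet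
  set z := S⁻¹ *ᵥ x with hz
  have hxz : S *ᵥ z = x := by
    rw [hz, Matrix.mulVec_mulVec, Matrix.mul_nonsing_inv _ hdet, Matrix.one_mulVec]
  have h1 : c₀ / C * t * (z ⬝ᵥ z) ≤ W *ᵥ z ⬝ᵥ z := key z
  have h2 : W *ᵥ z ⬝ᵥ z = x ⬝ᵥ x := by
    rw [← hSS, ← Matrix.mulVec_mulVec, hxz, dotProduct_comm,
      Matrix.dotProduct_mulVec, ← Matrix.mulVec_transpose, hSt, hxz]
  rw [h2] at h1
  have hct : 0 < c₀ / C * t := by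
    have := ht.1
    positivity
  calc z ⬝ᵥ z = (c₀ / C * t)⁻¹ * (c₀ / C * t * (z ⬝ᵥ z)) := by
        rw [← mul_assoc, inv_mul_cancel₀ hct.ne', one_mul]
    _ ≤ (c₀ / C * t)⁻¹ * (x ⬝ᵥ x) :=
        mul_le_mul_of_nonneg_left h1 (inv_nonneg.mpr hct.le)
end

section
/- For every t ≥ 0, the Hilbert-space adjoint of S(t) on H is given explicitly by S(t)^*(z₀,z₁) = (e^{t a₀ᵀ} z₀, w₁), where w₁ ∈ L²([-d,0];ℝⁿ) is given by w₁(ξ) = e^{(ξ+t) a₀ᵀ} z₀ for ξ ∈ [-t, 0] ∩ [-d,0] and w₁(ξ) = z₁(ξ + t) for ξ ∈ [-d, -t); equivalently, for all x = (x₀,x₁) and z = (z₀,z₁) in H, ⟨S(t)x, z⟩ = ⟨x, (e^{t a₀ᵀ} z₀, w₁)⟩. -/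
open MeasureTheory Matrix NormedSpace
open scoped RealInnerProductSpace

noncomputable def M2C (n : ℕ) :
    Matrix (Fin n) (Fin n) ℝ →ₗ[ℝ] (EuclideanSpace ℝ (Fin n) →L[ℝ] EuclideanSpace ℝ (Fin n)) where
  toFun A := Matrix.toEuclideanCLM (𝕜 := ℝ) A
  map_add' A B := by simp [map_add]
  map_smul' c A := by simp [_root_.map_smul]

lemma M2C_apply {n : ℕ} (A : Matrix (Fin n) (Fin n) ℝ) (v : EuclideanSpace ℝ (Fin n)) :
    M2C n A v = Matrix.toEuclideanLin A v := rfl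

lemma M2C_exp {n : ℕ} (A : Matrix (Fin n) (Fin n) ℝ) :
    M2C n (exp A) = exp (M2C n A) := by
  letI : SeminormedRing (Matrix (Fin n) (Fin n) ℝ) := Matrix.linftyOpSemiNormedRing
  letI : NormedRing (Matrix (Fin n) (Fin n) ℝ) := Matrix.linftyOpNormedRing
  letI : NormedAlgebra ℝ (Matrix (Fin n) (Fin n) ℝ) := Matrix.linftyOpNormedAlgebra
  haveI : CompleteSpace (Matrix (Fin n) (Fin n) ℝ) :=
    inferInstanceAs (CompleteSpace (Fin n → Fin n → ℝ))
  letI : NormedAlgebra ℚ (Matrix (Fin n) (Fin n) ℝ) := NormedAlgebra.restrictScalars ℚ ℝ _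
  exact map_exp (Matrix.toEuclideanCLM (𝕜 := ℝ) (n := Fin n))
    ((M2C n).continuous_of_finiteDimensional) A

lemma toEuclideanLin_exp_smul_apply {n : ℕ} (A : Matrix (Fin n) (Fin n) ℝ) (c : ℝ)
    (v : EuclideanSpace ℝ (Fin n)) :
    Matrix.toEuclideanLin (exp (c • A)) v = exp (c • M2C n A) v := by
  rw [← _root_.map_smul (M2C n) c A, ← M2C_exp, M2C_apply]

lemma inner_toEuclideanLin {n : ℕ} (A : Matrix (Fin n) (Fin n) ℝ)
    (v w : EuclideanSpace ℝ (Fin n)) :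
    ⟪Matrix.toEuclideanLin A v, w⟫ = ⟪v, Matrix.toEuclideanLin Aᵀ w⟫ := by
  rw [EuclideanSpace.inner_eq_star_dotProduct, EuclideanSpace.inner_eq_star_dotProduct]
  simp only [ofLp_toEuclideanLin_apply, star_trivial]
  rw [Matrix.dotProduct_mulVec, Matrix.mulVec_transpose]

/-- The Hilbert adjoint of the delay semigroup `S(t)` on `H = ℝⁿ × L²([-d,0];ℝⁿ)` is
`S(t)^*(z₀,z₁) = (e^{t a₀ᵀ} z₀, w₁)` with `w₁(ξ) = e^{(ξ+t) a₀ᵀ} z₀` on `[-t,0] ∩ [-d,0]`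
and `w₁(ξ) = z₁(ξ+t)` on `[-d,-t)`: equivalently, for all `x, z ∈ H`,
`⟨S(t)x, z⟩_H = ⟨x, (e^{t a₀ᵀ} z₀, w₁)⟩_H`, where the inner product of `H` is the sum of
the inner products of the components. -/
theorem delay_semigroup_adjoint
    (n : ℕ) (d : ℝ) (hd : 0 < d) (a₀ : Matrix (Fin n) (Fin n) ℝ)
    (S : ℝ →
      ((EuclideanSpace ℝ (Fin n) ×
          Lp (EuclideanSpace ℝ (Fin n)) 2 (volume.restrict (Set.Icc (-d) (0:ℝ)))) →ₗ[ℝ]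
        (EuclideanSpace ℝ (Fin n) ×
          Lp (EuclideanSpace ℝ (Fin n)) 2 (volume.restrict (Set.Icc (-d) (0:ℝ))))))
    (hS1 : ∀ t : ℝ, 0 ≤ t → ∀ x, (S t x).1 =
      Matrix.toEuclideanLin (NormedSpace.exp (t • a₀)) x.1 +
        ∫ s in Set.Icc (-d) (0:ℝ),
          Set.indicator (Set.Icc (-t) 0)
            (fun u => Matrix.toEuclideanLin (NormedSpace.exp ((t + u) • a₀)) (x.2 u)) s)
    (hS2 : ∀ t : ℝ, 0 ≤ t → ∀ x, (S t x).2 =ᵐ[volume.restrict (Set.Icc (-d) (0:ℝ))]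
      Set.indicator (Set.Icc (-d + t) 0) (fun u => x.2 (u - t))) :
    ∀ t : ℝ, 0 ≤ t → ∀ x z :
      EuclideanSpace ℝ (Fin n) ×
        Lp (EuclideanSpace ℝ (Fin n)) 2 (volume.restrict (Set.Icc (-d) (0:ℝ))),
    ∀ w₁ : Lp (EuclideanSpace ℝ (Fin n)) 2 (volume.restrict (Set.Icc (-d) (0:ℝ))),
      (w₁ =ᵐ[volume.restrict (Set.Icc (-d) (0:ℝ))] fun ξ =>
        if ξ ∈ Set.Icc (-t) 0 then
          Matrix.toEuclideanLin (NormedSpace.exp ((ξ + t) • a₀ᵀ)) z.1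
        else z.2 (ξ + t)) →
      ⟪(S t x).1, z.1⟫ + ⟪(S t x).2, z.2⟫ =
        ⟪x.1, Matrix.toEuclideanLin (NormedSpace.exp (t • a₀ᵀ)) z.1⟫ + ⟪x.2, w₁⟫ := by
  intro t ht x z w₁ hw₁
  classical
  haveI : IsFiniteMeasure (volume.restrict (Set.Icc (-d) (0:ℝ))) := by
    constructor
    rw [Measure.restrict_apply_univ]
    exact measure_Icc_lt_top
  -- operator-valued functions
  set Φ : ℝ → (EuclideanSpace ℝ (Fin n) →L[ℝ] EuclideanSpace ℝ (Fin n)) :=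
    fun s => exp ((s + t) • M2C n a₀) with hΦdef
  set Ψ : ℝ → (EuclideanSpace ℝ (Fin n) →L[ℝ] EuclideanSpace ℝ (Fin n)) :=
    fun s => exp ((s + t) • M2C n a₀ᵀ) with hΨdef
  letI : NormedAlgebra ℚ (EuclideanSpace ℝ (Fin n) →L[ℝ] EuclideanSpace ℝ (Fin n)) :=
    NormedAlgebra.restrictScalars ℚ ℝ _
  have hΦcont : Continuous Φ :=
    exp_continuous.comp ((continuous_id.add continuous_const).smul continuous_const)
  have hΨcont : Continuous Ψ :=
    exp_continuous.comp ((continuous_id.add continuous_const).smul continuous_const)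
  obtain ⟨C, hC⟩ : ∃ C, ∀ s ∈ Set.Icc (-t) (0:ℝ), ‖Φ s‖ ≤ C :=
    isCompact_Icc.exists_bound_of_continuousOn hΦcont.continuousOn
  obtain ⟨C', hC'⟩ : ∃ C', ∀ s ∈ Set.Icc (-t) (0:ℝ), ‖Ψ s‖ ≤ C' :=
    isCompact_Icc.exists_bound_of_continuousOn hΨcont.continuousOn
  have hx2int : Integrable (⇑x.2) (volume.restrict (Set.Icc (-d) (0:ℝ))) :=
    (Lp.memLp x.2).integrable one_le_two
  have hx2m := Lp.aestronglyMeasurable x.2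
  -- the two scalar integrands
  set I1 : ℝ → ℝ :=
    Set.indicator (Set.Icc (-t) 0) (fun u => ⟪x.2 u, Ψ u z.1⟫) with hI1def
  set J : ℝ → ℝ :=
    Set.indicator (Set.Icc (-t) (0:ℝ))ᶜ (fun u => ⟪x.2 u, z.2 (u + t)⟫) with hJdef
  -- integrability of I1
  have hI1m : AEStronglyMeasurable I1 (volume.restrict (Set.Icc (-d) (0:ℝ))) := by
    refine AEStronglyMeasurable.indicator ?_ measurableSet_Icc
    exact hx2m.inner ((hΨcont.aestronglyMeasurable).apply_continuousLinearMap z.1)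
  have hI1int : Integrable I1 (volume.restrict (Set.Icc (-d) (0:ℝ))) := by
    refine Integrable.mono' ((hx2int.norm).const_mul (max C' 0 * ‖z.1‖)) hI1m ?_
    filter_upwards with s
    rw [Real.norm_eq_abs]
    by_cases hs : s ∈ Set.Icc (-t) (0:ℝ)
    · rw [hI1def, Set.indicator_of_mem hs]
      calc |⟪x.2 s, Ψ s z.1⟫| ≤ ‖x.2 s‖ * ‖Ψ s z.1‖ := abs_real_inner_le_norm _ _
        _ ≤ ‖x.2 s‖ * (‖Ψ s‖ * ‖z.1‖) := by
            gcongr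
            exact (Ψ s).le_opNorm _
        _ ≤ ‖x.2 s‖ * (max C' 0 * ‖z.1‖) := by
            gcongr
            exact le_max_of_le_left (hC' s hs)
        _ = max C' 0 * ‖z.1‖ * ‖x.2 s‖ := by ring
    · rw [hI1def, Set.indicator_of_notMem hs]
      simp only [abs_zero]
      positivity
  -- Step 1 : the first component
  have h1 : ⟪(S t x).1, z.1⟫ =
      ⟪x.1, Matrix.toEuclideanLin (NormedSpace.exp (t • a₀ᵀ)) z.1⟫ +
        ∫ u, I1 u ∂(volume.restrict (Set.Icc (-d) (0:ℝ))) := by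
    have hFeq : (fun s => Set.indicator (Set.Icc (-t) 0)
        (fun u => Matrix.toEuclideanLin (NormedSpace.exp ((t + u) • a₀)) (x.2 u)) s)
        = Set.indicator (Set.Icc (-t) 0) (fun u => Φ u (x.2 u)) := by
      funext s
      by_cases hs : s ∈ Set.Icc (-t) (0:ℝ)
      · rw [Set.indicator_of_mem hs, Set.indicator_of_mem hs,
          toEuclideanLin_exp_smul_apply, add_comm t s]
      · rw [Set.indicator_of_notMem hs, Set.indicator_of_notMem hs]
    have hFm : AEStronglyMeasurable (fun u => Φ u (x.2 u))
        (volume.restrict (Set.Icc (-d) (0:ℝ))) :=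
      (ContinuousLinearMap.apply ℝ (EuclideanSpace ℝ (Fin n))).flip.aestronglyMeasurable_comp₂
        hΦcont.aestronglyMeasurable hx2m
    have hFint : Integrable (Set.indicator (Set.Icc (-t) 0) (fun u => Φ u (x.2 u)))
        (volume.restrict (Set.Icc (-d) (0:ℝ))) := by
      refine Integrable.mono' ((hx2int.norm).const_mul (max C 0))
        (hFm.indicator measurableSet_Icc) ?_
      filter_upwards with s
      by_cases hs : s ∈ Set.Icc (-t) (0:ℝ)
      · rw [Set.indicator_of_mem hs]
        calc ‖Φ s (x.2 s)‖ ≤ ‖Φ s‖ * ‖x.2 s‖ := (Φ s).le_opNorm _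
          _ ≤ max C 0 * ‖x.2 s‖ := by
              gcongr
              exact le_max_of_le_left (hC s hs)
      · rw [Set.indicator_of_notMem hs]
        simp only [norm_zero]
        positivity
    rw [hS1 t ht x, inner_add_left]
    congr 1
    · rw [inner_toEuclideanLin, ← Matrix.exp_transpose, Matrix.transpose_smul]
    · rw [hFeq, real_inner_comm, ← integral_inner hFint z.1]
      refine integral_congr_ae (Filter.Eventually.of_forall fun s => ?_)
      beta_reduce
      by_cases hs : s ∈ Set.Icc (-t) (0:ℝ)
      · rw [Set.indicator_of_mem hs, hI1def, Set.indicator_of_mem hs, real_inner_comm]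
        have : Φ s (x.2 s) = Matrix.toEuclideanLin (exp ((s + t) • a₀)) (x.2 s) :=
          (toEuclideanLin_exp_smul_apply _ _ _).symm
        rw [this, inner_toEuclideanLin, ← Matrix.exp_transpose, Matrix.transpose_smul,
          toEuclideanLin_exp_smul_apply]
      · rw [Set.indicator_of_notMem hs, hI1def, Set.indicator_of_notMem hs,
          inner_zero_right]
  -- Step 2 : the second component
  have hae_ne : ∀ᵐ ξ : ℝ ∂(volume : Measure ℝ), ξ ≠ -t := by
    rw [ae_iff]
    simp only [not_not]
    exact Real.volume_singleton
  have h2 : ⟪(S t x).2, z.2⟫ = ∫ u, J u ∂(volume.restrict (Set.Icc (-d) (0:ℝ))) := by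
    set g : ℝ → ℝ := Set.indicator (Set.Icc (-d) (-t)) (fun ξ => ⟪x.2 ξ, z.2 (ξ + t)⟫)
      with hgdef
    have step1 : ⟪(S t x).2, z.2⟫ = ∫ u, Set.indicator (Set.Icc (-d + t) 0)
        (fun v => ⟪x.2 (v - t), z.2 v⟫) u ∂(volume.restrict (Set.Icc (-d) (0:ℝ))) := by
      rw [L2.inner_def]
      refine integral_congr_ae (((hS2 t ht x).mono fun u hu => ?_))
      beta_reduce
      rw [hu]
      by_cases h : u ∈ Set.Icc (-d + t) (0:ℝ)
      · rw [Set.indicator_of_mem h, Set.indicator_of_mem h]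
      · rw [Set.indicator_of_notMem h, Set.indicator_of_notMem h, inner_zero_left]
    rw [step1]
    rw [← integral_indicator measurableSet_Icc]
    have step2 : (fun u => Set.indicator (Set.Icc (-d) (0:ℝ))
        (Set.indicator (Set.Icc (-d + t) 0) (fun v => ⟪x.2 (v - t), z.2 v⟫)) u)
        = fun u => g (u - t) := by
      funext u
      rw [hgdef]
      by_cases h : u - t ∈ Set.Icc (-d) (-t)
      · have h1 : u ∈ Set.Icc (-d) (0:ℝ) := by
          simp only [Set.mem_Icc] at h ⊢
          constructor <;> linarith [h.1, h.2]
        have h2 : u ∈ Set.Icc (-d + t) (0:ℝ) := by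
          simp only [Set.mem_Icc] at h ⊢
          constructor <;> linarith [h.1, h.2]
        rw [Set.indicator_of_mem h1, Set.indicator_of_mem h2, Set.indicator_of_mem h,
          sub_add_cancel]
      · by_cases h1 : u ∈ Set.Icc (-d) (0:ℝ)
        · have h2 : u ∉ Set.Icc (-d + t) (0:ℝ) := by
            simp only [Set.mem_Icc] at h h1 ⊢
            intro hc
            exact h ⟨by linarith [hc.1], by linarith [hc.2]⟩
          rw [Set.indicator_of_mem h1, Set.indicator_of_notMem h2,
            Set.indicator_of_notMem h]
        · rw [Set.indicator_of_notMem h1, Set.indicator_of_notMem h]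
    rw [step2]
    have step3 : ∫ u, g (u - t) ∂(volume : Measure ℝ) = ∫ ξ, g ξ ∂(volume : Measure ℝ) := by
      simpa [sub_eq_add_neg] using integral_add_right_eq_self g (-t)
    rw [step3]
    have step4 : ∫ ξ, g ξ ∂(volume : Measure ℝ)
        = ∫ ξ, Set.indicator (Set.Icc (-d) (0:ℝ)) J ξ ∂(volume : Measure ℝ) := by
      refine integral_congr_ae (hae_ne.mono fun ξ hξ => ?_)
      rw [hgdef, hJdef]
      by_cases h : ξ ∈ Set.Icc (-d) (-t)
      · have hne : ξ < -t := lt_of_le_of_ne (Set.mem_Icc.mp h).2 hξ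
        have h1 : ξ ∈ Set.Icc (-d) (0:ℝ) := by
          simp only [Set.mem_Icc] at h ⊢
          exact ⟨h.1, by linarith⟩
        have h2 : ξ ∈ (Set.Icc (-t) (0:ℝ))ᶜ := by
          simp only [Set.mem_compl_iff, Set.mem_Icc, not_and]
          intro hc
          linarith
        rw [Set.indicator_of_mem h, Set.indicator_of_mem h1, Set.indicator_of_mem h2]
      · rw [Set.indicator_of_notMem h]
        by_cases h1 : ξ ∈ Set.Icc (-d) (0:ℝ)
        · have h2 : ξ ∈ Set.Icc (-t) (0:ℝ) := by
            simp only [Set.mem_Icc] at h h1 ⊢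
            constructor
            · by_contra hc
              exact h ⟨h1.1, by linarith⟩
            · exact h1.2
          rw [Set.indicator_of_mem h1, Set.indicator_of_notMem (by simpa using h2)]
        · rw [Set.indicator_of_notMem h1]
    rw [step4, integral_indicator measurableSet_Icc]
  -- Step 3 : the adjoint candidate
  have h3 : ⟪x.2, w₁⟫ = (∫ u, I1 u ∂(volume.restrict (Set.Icc (-d) (0:ℝ))))
      + ∫ u, J u ∂(volume.restrict (Set.Icc (-d) (0:ℝ))) := by
    have hptwise : ∀ ξ : ℝ, ⟪x.2 ξ,
        if ξ ∈ Set.Icc (-t) 0 then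
          Matrix.toEuclideanLin (NormedSpace.exp ((ξ + t) • a₀ᵀ)) z.1
        else z.2 (ξ + t)⟫ = I1 ξ + J ξ := by
      intro ξ
      rw [hI1def, hJdef]
      by_cases h : ξ ∈ Set.Icc (-t) (0:ℝ)
      · rw [if_pos h, Set.indicator_of_mem h,
          Set.indicator_of_notMem (by simpa using h), add_zero,
          toEuclideanLin_exp_smul_apply]
      · rw [if_neg h, Set.indicator_of_notMem h,
          Set.indicator_of_mem (by simpa using h), zero_add]
    have hIJeq : (fun ξ => ⟪x.2 ξ, w₁ ξ⟫) =ᵐ[volume.restrict (Set.Icc (-d) (0:ℝ))]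
        fun ξ => I1 ξ + J ξ := by
      refine hw₁.mono fun ξ h => ?_
      beta_reduce
      rw [h]
      exact hptwise ξ
    have hIJint : Integrable (fun ξ => I1 ξ + J ξ)
        (volume.restrict (Set.Icc (-d) (0:ℝ))) :=
      (L2.integrable_inner (𝕜 := ℝ) x.2 w₁).congr hIJeq
    have hJint : Integrable J (volume.restrict (Set.Icc (-d) (0:ℝ))) := by
      have : J = fun ξ => (I1 ξ + J ξ) - I1 ξ := by
        funext ξ
        ring
      rw [this]
      exact hIJint.sub hI1int
    rw [L2.inner_def, integral_congr_ae hIJeq, integral_add hI1int hJint]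
  rw [h1, h2, h3]
  ring
end

section
/- Let H, E, F be real Hilbert spaces and let S : E → H and T : F → H be bounded linear operators. If there exists c ≥ 0 such that ‖S^* x‖_E ≤ c ‖T^* x‖_F for all x ∈ H, then range(S) ⊆ range(T). In particular, if ‖S^* x‖_E = ‖T^* x‖_F for all x ∈ H, then range(S) = range(T). -/
open scoped InnerProductSpace

private lemma aux_range_subset
    {H E F : Type*}
    [NormedAddCommGroup H] [InnerProductSpace ℝ H] [CompleteSpace H]
    [NormedAddCommGroup E] [InnerProductSpace ℝ E] [CompleteSpace E]
    [NormedAddCommGroup F] [InnerProductSpace ℝ F] [CompleteSpace F]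
    (S : E →L[ℝ] H) (T : F →L[ℝ] H) (c : ℝ) (hc : 0 ≤ c)
    (h : ∀ x : H, ‖S.adjoint x‖ ≤ c * ‖T.adjoint x‖) :
    Set.range S ⊆ Set.range T := by
  rintro _ ⟨u, rfl⟩
  set A : H →ₗ[ℝ] F := (T.adjoint : H →L[ℝ] F).toLinearMap with hA
  set φ : H →ₗ[ℝ] ℝ := (((innerSL ℝ u).comp S.adjoint : H →L[ℝ] ℝ) : H →ₗ[ℝ] ℝ) with hφ
  have hφ_apply : ∀ x : H, φ x = ⟪u, S.adjoint x⟫_ℝ := fun x => rfl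
  have hker : LinearMap.ker A ≤ LinearMap.ker φ := by
    intro x hx
    have hx' : T.adjoint x = 0 := hx
    have h1 : ‖S.adjoint x‖ ≤ 0 := by
      have := h x
      rw [hx', norm_zero, mul_zero] at this
      exact this
    have h2 : S.adjoint x = 0 := norm_le_zero_iff.mp h1
    simp [LinearMap.mem_ker, hφ_apply, h2]
  set e := A.quotKerEquivRange with he
  set ψ : LinearMap.range A →ₗ[ℝ] ℝ :=
    ((LinearMap.ker A).liftQ φ hker).comp e.symm.toLinearMap with hψ
  have key : ∀ x : H, ψ ⟨A x, LinearMap.mem_range_self A x⟩ = φ x := by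
    intro x
    have h1 : e (Submodule.Quotient.mk x) = ⟨A x, LinearMap.mem_range_self A x⟩ :=
      Subtype.ext (A.quotKerEquivRange_apply_mk x)
    have h2 : e.symm ⟨A x, LinearMap.mem_range_self A x⟩ = Submodule.Quotient.mk x := by
      rw [← h1, LinearEquiv.symm_apply_apply]
    simp [hψ, h2]
  have hbound : ∀ m : LinearMap.range A, ‖ψ m‖ ≤ (c * ‖u‖) * ‖m‖ := by
    rintro ⟨_, x, rfl⟩
    rw [key x, hφ_apply]
    calc ‖⟪u, S.adjoint x⟫_ℝ‖ ≤ ‖u‖ * ‖S.adjoint x‖ := norm_inner_le_norm u _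
      _ ≤ ‖u‖ * (c * ‖T.adjoint x‖) := by
          exact mul_le_mul_of_nonneg_left (h x) (norm_nonneg u)
      _ = (c * ‖u‖) * ‖T.adjoint x‖ := by ring
      _ = (c * ‖u‖) * ‖(⟨A x, LinearMap.mem_range_self A x⟩ : LinearMap.range A)‖ := rfl
  set ψc : LinearMap.range A →L[ℝ] ℝ := ψ.mkContinuous (c * ‖u‖) hbound with hψc
  obtain ⟨g, hg, -⟩ := exists_extension_norm_eq (LinearMap.range A) ψc
  set f := (InnerProductSpace.toDual ℝ F).symm g with hf
  refine ⟨f, ?_⟩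
  apply ext_inner_right ℝ
  intro x
  have h1 : ⟪T f, x⟫_ℝ = ⟪f, T.adjoint x⟫_ℝ :=
    (ContinuousLinearMap.adjoint_inner_right T f x).symm
  have h2 : ⟪f, T.adjoint x⟫_ℝ = g (T.adjoint x) := InnerProductSpace.toDual_symm_apply
  have h3 : g (T.adjoint x) = ψc ⟨A x, LinearMap.mem_range_self A x⟩ :=
    hg ⟨A x, LinearMap.mem_range_self A x⟩
  have h4 : ψc ⟨A x, LinearMap.mem_range_self A x⟩ = φ x := key x
  have h5 : φ x = ⟪S u, x⟫_ℝ := by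
    rw [hφ_apply]
    exact ContinuousLinearMap.adjoint_inner_right S u x
  rw [h1, h2, h3, h4, h5]

/-- If `S : E → H` and `T : F → H` are bounded operators between real Hilbert spaces and
`‖S^* x‖ ≤ c ‖T^* x‖` for all `x ∈ H`, then `range S ⊆ range T`; in particular, if
`‖S^* x‖ = ‖T^* x‖` for all `x`, then `range S = range T`. -/
theorem range_subset_of_adjoint_norm_le
    {H E F : Type*}
    [NormedAddCommGroup H] [InnerProductSpace ℝ H] [CompleteSpace H]
    [NormedAddCommGroup E] [InnerProductSpace ℝ E] [CompleteSpace E]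
    [NormedAddCommGroup F] [InnerProductSpace ℝ F] [CompleteSpace F]
    (S : E →L[ℝ] H) (T : F →L[ℝ] H) :
    ((∃ c : ℝ, 0 ≤ c ∧ ∀ x : H, ‖S.adjoint x‖ ≤ c * ‖T.adjoint x‖) →
      Set.range S ⊆ Set.range T) ∧
    ((∀ x : H, ‖S.adjoint x‖ = ‖T.adjoint x‖) → Set.range S = Set.range T) := by
  constructor
  · rintro ⟨c, hc, h⟩
    exact aux_range_subset S T c hc h
  · intro h
    apply Set.Subset.antisymm
    · exact aux_range_subset S T 1 zero_le_one (fun x => by rw [h x, one_mul])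
    · exact aux_range_subset T S 1 zero_le_one (fun x => by rw [← h x, one_mul])
end

section
/- Let H, F be real Hilbert spaces, T : F → H a bounded linear operator, and let R : H → H be a bounded self-adjoint operator with ⟨R x, x⟩ ≥ 0 for all x ∈ H and R ∘ R = T ∘ T^* (i.e., R is the positive square root of T T^*). Then range(T) = range(R). -/
open InnerProductSpace

/-- Douglas-type lemma: if `‖A x‖ ≤ ‖B x‖` for all `x`, then every element of the range of
`A†` lies in the range of `B†`. -/
lemma douglas_aux {H F₁ F₂ : Type*}
    [NormedAddCommGroup H] [InnerProductSpace ℝ H] [CompleteSpace H]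
    [NormedAddCommGroup F₁] [InnerProductSpace ℝ F₁] [CompleteSpace F₁]
    [NormedAddCommGroup F₂] [InnerProductSpace ℝ F₂] [CompleteSpace F₂]
    (A : H →L[ℝ] F₁) (B : H →L[ℝ] F₂) (h : ∀ x, ‖A x‖ ≤ ‖B x‖) (u : F₁) :
    ∃ v : F₂, B.adjoint v = A.adjoint u := by
  -- the functional x ↦ ⟪u, A x⟫
  set φ : H →L[ℝ] ℝ := (innerSL ℝ u).comp A with hφ
  have hker : LinearMap.ker (B : H →ₗ[ℝ] F₂) ≤ LinearMap.ker (φ : H →ₗ[ℝ] ℝ) := by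
    intro x hx
    simp only [LinearMap.mem_ker, ContinuousLinearMap.coe_coe] at hx ⊢
    have hAx : A x = 0 := by
      have := h x
      rw [hx, norm_zero] at this
      simpa using norm_le_zero_iff.mp this
    simp [hφ, hAx]
  set e := LinearMap.quotKerEquivRange (B : H →ₗ[ℝ] F₂) with he
  set f₀ : LinearMap.range (B : H →ₗ[ℝ] F₂) →ₗ[ℝ] ℝ :=
    (LinearMap.ker (B : H →ₗ[ℝ] F₂)).liftQ (φ : H →ₗ[ℝ] ℝ) hker ∘ₗ e.symm.toLinearMap with hf₀
  have hf₀_eval : ∀ (x : H) (hx : B x ∈ LinearMap.range (B : H →ₗ[ℝ] F₂)),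
      f₀ ⟨B x, hx⟩ = φ x := by
    intro x hx
    have : e (Submodule.Quotient.mk x) = ⟨B x, hx⟩ := by
      apply Subtype.ext
      simp [he, LinearMap.quotKerEquivRange_apply_mk]
    rw [hf₀]
    simp only [LinearMap.comp_apply, LinearEquiv.coe_toLinearMap]
    rw [← this, LinearEquiv.symm_apply_apply]
    simp
  have hbound : ∀ y : LinearMap.range (B : H →ₗ[ℝ] F₂), ‖f₀ y‖ ≤ ‖u‖ * ‖y‖ := by
    rintro ⟨y, x, rfl⟩
    show ‖f₀ ⟨B x, ⟨x, rfl⟩⟩‖ ≤ ‖u‖ * ‖(⟨B x, ⟨x, rfl⟩⟩ : LinearMap.range (B : H →ₗ[ℝ] F₂))‖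
    rw [hf₀_eval x ⟨x, rfl⟩]
    have h1 : ‖φ x‖ ≤ ‖u‖ * ‖A x‖ := by
      simp only [hφ, ContinuousLinearMap.comp_apply, innerSL_apply_apply]
      exact norm_inner_le_norm u (A x)
    calc ‖φ x‖ ≤ ‖u‖ * ‖A x‖ := h1
      _ ≤ ‖u‖ * ‖B x‖ := by gcongr; exact h x
      _ = ‖u‖ * ‖(⟨B x, ⟨x, rfl⟩⟩ : LinearMap.range (B : H →ₗ[ℝ] F₂))‖ := rfl
  set f := f₀.mkContinuous ‖u‖ hbound with hf
  obtain ⟨g, hg, -⟩ := exists_extension_norm_eq (LinearMap.range (B : H →ₗ[ℝ] F₂)) f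
  refine ⟨(InnerProductSpace.toDual ℝ F₂).symm g, ?_⟩
  apply ext_inner_right ℝ
  intro x
  rw [ContinuousLinearMap.adjoint_inner_left, ContinuousLinearMap.adjoint_inner_left]
  have h2 : inner (𝕜 := ℝ) ((InnerProductSpace.toDual ℝ F₂).symm g) (B x) = g (B x) :=
    InnerProductSpace.toDual_symm_apply
  rw [h2]
  have h3 := hg ⟨B x, ⟨x, rfl⟩⟩
  simp only [hf] at h3
  rw [h3]
  have h4 : (f₀.mkContinuous ‖u‖ hbound) ⟨B x, ⟨x, rfl⟩⟩ = f₀ ⟨B x, ⟨x, rfl⟩⟩ := rfl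
  rw [h4, hf₀_eval x ⟨x, rfl⟩]
  simp [hφ]

/-- If `T : F → H` is a bounded operator between real Hilbert spaces and `R : H → H` is a
bounded nonnegative self-adjoint operator with `R² = T T^*` (the positive square root of
`T T^*`), then `range T = range R`. -/
theorem range_eq_range_sqrt
    {H F : Type*}
    [NormedAddCommGroup H] [InnerProductSpace ℝ H] [CompleteSpace H]
    [NormedAddCommGroup F] [InnerProductSpace ℝ F] [CompleteSpace F]
    (T : F →L[ℝ] H) (R : H →L[ℝ] H)
    (hR_sa : IsSelfAdjoint R)
    (hR_pos : ∀ x : H, 0 ≤ inner (𝕜 := ℝ) (R x) x)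
    (hR_sq : R.comp R = T.comp T.adjoint) :
    Set.range T = Set.range R := by
  have hRadj : R.adjoint = R := hR_sa
  have hnorm : ∀ x : H, ‖T.adjoint x‖ = ‖R x‖ := by
    intro x
    have h1 : ‖T.adjoint x‖ ^ 2 = ‖R x‖ ^ 2 := by
      rw [← real_inner_self_eq_norm_sq, ← real_inner_self_eq_norm_sq]
      have : inner (𝕜 := ℝ) (T.adjoint x) (T.adjoint x)
          = inner (𝕜 := ℝ) (T (T.adjoint x)) x := by
        rw [ContinuousLinearMap.adjoint_inner_left, real_inner_comm]
      rw [this]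
      have h2 : T (T.adjoint x) = R (R x) := by
        have := congrArg (fun S => S x) hR_sq
        simpa using this.symm
      rw [h2]
      rw [← ContinuousLinearMap.adjoint_inner_left, hRadj]
    nlinarith [norm_nonneg (T.adjoint x), norm_nonneg (R x)]
  ext y
  constructor
  · rintro ⟨u, rfl⟩
    obtain ⟨v, hv⟩ := douglas_aux T.adjoint R (fun x => (hnorm x).le) u
    rw [hRadj, ContinuousLinearMap.adjoint_adjoint] at hv
    exact ⟨v, hv⟩
  · rintro ⟨u, rfl⟩
    obtain ⟨v, hv⟩ := douglas_aux R T.adjoint (fun x => (hnorm x).ge) u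
    rw [hRadj, ContinuousLinearMap.adjoint_adjoint] at hv
    exact ⟨v, hv⟩
end
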